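/- Let E be a complex Hilbert space, let A, B : E →L[ℂ] E be bounded self-adjoint operators, and let x ∈ E with ‖x‖ = 1. Define ψ(s) = exp(−isA)x and ψ_C(s) = exp(−isB)x. Then for every t ≥ 0, ‖ψ(t) − ψ_C(t)‖² ≤ 2t · sup_{s ∈ [0,t]} ‖(A − B)(ψ_C(s))‖. -/

import Mathlib

open NormedSpace

section Aux

variable {E : Type*} [NormedAddCommGroup E] [InnerProductSpace ℂ E] [CompleteSpace E]

lemma aux_exp_unitary (T : E →L[ℂ] E) (hT : IsSelfAdjoint T) (c : ℂ) (hc : star c = -c) :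
    exp (c • T) ∈ unitary (E →L[ℂ] E) :=
  letI : NormedAlgebra ℚ (E →L[ℂ] E) := .restrictScalars ℚ ℂ _
  exp_mem_unitary_of_mem_skewAdjoint (by
    rw [skewAdjoint.mem_iff, star_smul, hT.star_eq, hc, neg_smul])

lemma aux_hasDerivAt_exp (C : E →L[ℂ] E) (s : ℝ) :
    HasDerivAt (fun s : ℝ => exp ((s : ℂ) • C)) (exp ((s : ℂ) • C) * C) s := by
  have h := (hasDerivAt_exp_smul_const (𝕂 := ℂ) C (s : ℂ)).hasFDerivAt.restrictScalars ℝ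
  have hr : HasDerivAt (fun s : ℝ => (s : ℂ)) 1 s := by
    simpa using! Complex.ofRealCLM.hasDerivAt
  simpa using! h.comp_hasDerivAt s hr

end Aux

/-- For unitary evolutions `ψ(s) = exp(−isA)x` and `ψ_C(s) = exp(−isB)x` generated by
bounded self-adjoint operators `A`, `B`, starting from a unit vector `x`, the drift
satisfies `‖ψ(t) − ψ_C(t)‖² ≤ 2t · sup_{s ∈ [0,t]} ‖(A − B)ψ_C(s)‖`. -/
theorem sq_dist_evolutions_le {E : Type*} [NormedAddCommGroup E]
    [InnerProductSpace ℂ E] [CompleteSpace E]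
    (A B : E →L[ℂ] E) (hA : IsSelfAdjoint A) (hB : IsSelfAdjoint B) (x : E)
    (hx : ‖x‖ = 1) (ψ ψC : ℝ → E)
    (hψ : ∀ s : ℝ, ψ s = NormedSpace.exp ((-(Complex.I * (s : ℂ))) • A) x)
    (hψC : ∀ s : ℝ, ψC s = NormedSpace.exp ((-(Complex.I * (s : ℂ))) • B) x) :
    ∀ t : ℝ, 0 ≤ t →
      ‖ψ t - ψC t‖ ^ 2 ≤ 2 * t * ⨆ s ∈ Set.Icc (0 : ℝ) t, ‖(A - B) (ψC s)‖ := by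
  intro t ht
  set C : E →L[ℂ] E := Complex.I • A with hCdef
  set D : E →L[ℂ] E := (-Complex.I) • B with hDdef
  -- rewrite the evolutions in `(s : ℂ) • _` form
  have hψC' : ∀ s : ℝ, ψC s = exp ((s : ℂ) • D) x := by
    intro s
    rw [hψC s, hDdef, smul_smul]
    congr 2
    ring
  have hψ' : ∀ s : ℝ, ψ s = exp ((s : ℂ) • (-C)) x := by
    intro s
    rw [hψ s, hCdef, smul_neg, smul_smul, ← neg_smul]
    congr 2
    ring
  -- unitarity
  have hCu : ∀ s : ℝ, exp ((s : ℂ) • C) ∈ unitary (E →L[ℂ] E) := by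
    intro s
    rw [hCdef, smul_smul]
    refine aux_exp_unitary A hA _ ?_
    simp [Complex.ext_iff]
  have hCu' : ∀ s : ℝ, exp ((s : ℂ) • (-C)) ∈ unitary (E →L[ℂ] E) := by
    intro s
    rw [hCdef, smul_neg, smul_smul, ← neg_smul]
    refine aux_exp_unitary A hA _ ?_
    simp [Complex.ext_iff]
  have hDu : ∀ s : ℝ, exp ((s : ℂ) • D) ∈ unitary (E →L[ℂ] E) := by
    intro s
    rw [hDdef, smul_smul]
    refine aux_exp_unitary B hB _ ?_
    simp [Complex.ext_iff]
  -- the comparison path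
  set w : ℝ → E := fun s => exp ((s : ℂ) • C) (exp ((s : ℂ) • D) x) with hwdef
  set g : ℝ → E := fun s =>
    exp ((s : ℂ) • C) ((Complex.I • (A - B)) (exp ((s : ℂ) • D) x)) with hgdef
  -- bilinear application map
  set Φ : (E →L[ℂ] E) →L[ℝ] (E →L[ℝ] E) :=
    ContinuousLinearMap.restrictScalarsL ℂ E E ℝ ℝ with hΦdef
  have hΦapp : ∀ (P : E →L[ℂ] E) (y : E), Φ P y = P y := fun _ _ => rfl
  have hvx : ∀ s : ℝ, HasDerivAt (fun s : ℝ => exp ((s : ℂ) • D) x)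
      ((exp ((s : ℂ) • D) * D) x) s := by
    intro s
    have h := ContinuousLinearMap.hasDerivAt_of_bilinear (B := Φ)
      (fun _ => aux_hasDerivAt_exp D s) (fun _ => hasDerivAt_const s x)
    simpa [hΦapp] using h
  have hw : ∀ s : ℝ, HasDerivAt w (g s) s := by
    intro s
    have h := ContinuousLinearMap.hasDerivAt_of_bilinear (B := Φ)
      (fun _ => aux_hasDerivAt_exp C s) (fun _ => hvx s)
    have hDcomm : exp ((s : ℂ) • D) * D = D * exp ((s : ℂ) • D) :=
      (((Commute.refl D).smul_left ((s : ℂ))).exp_left).eq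
    have hCD : C + D = Complex.I • (A - B) := by
      rw [hCdef, hDdef, smul_sub, neg_smul]
      abel
    have : Φ (exp ((s : ℂ) • C)) ((exp ((s : ℂ) • D) * D) x)
        + Φ (exp ((s : ℂ) • C) * C) (exp ((s : ℂ) • D) x) = g s := by
      rw [hΦapp, hΦapp, hgdef]
      simp only [hDcomm, ContinuousLinearMap.mul_apply, ← hCD,
        ContinuousLinearMap.add_apply, ← map_add]
      rw [add_comm]
    rw [this] at h
    exact h
  -- norm of the derivative
  have hgnorm : ∀ s : ℝ, ‖g s‖ = ‖(A - B) (ψC s)‖ := by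
    intro s
    rw [hgdef, hψC' s]
    rw [ContinuousLinearMap.norm_map_of_mem_unitary (hCu s)]
    rw [ContinuousLinearMap.smul_apply, norm_smul, Complex.norm_I, one_mul]
  -- the sup bound
  set M : ℝ := ⨆ s ∈ Set.Icc (0 : ℝ) t, ‖(A - B) (ψC s)‖ with hMdef
  have hexp_cont : Continuous (fun s : ℝ => exp ((s : ℂ) • D) x) :=
    continuous_iff_continuousAt.mpr fun s => (hvx s).continuousAt
  have hf_cont : Continuous (fun s : ℝ => ‖(A - B) (ψC s)‖) := by
    simp only [hψC']
    exact ((A - B).continuous.comp hexp_cont).norm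
  have hbddim : BddAbove ((fun s : ℝ => ‖(A - B) (ψC s)‖) '' Set.Icc (0 : ℝ) t) :=
    (isCompact_Icc.image hf_cont).bddAbove
  have houter : BddAbove (Set.range fun s : ℝ =>
      ⨆ _ : s ∈ Set.Icc (0 : ℝ) t, ‖(A - B) (ψC s)‖) := by
    refine ⟨max (sSup ((fun s : ℝ => ‖(A - B) (ψC s)‖) '' Set.Icc (0 : ℝ) t)) 0, ?_⟩
    rintro _ ⟨s, rfl⟩
    dsimp only
    by_cases h : s ∈ Set.Icc (0 : ℝ) t
    · rw [ciSup_pos (f := fun _ : s ∈ Set.Icc (0 : ℝ) t => ‖(A - B) (ψC s)‖) h]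
      exact le_max_of_le_left (le_csSup hbddim ⟨s, h, rfl⟩)
    · haveI : IsEmpty (s ∈ Set.Icc (0 : ℝ) t) := ⟨fun hp => h hp⟩
      rw [Real.iSup_of_isEmpty]
      exact le_max_right _ _
  have hM : ∀ s ∈ Set.Icc (0 : ℝ) t, ‖(A - B) (ψC s)‖ ≤ M := by
    intro s hs
    rw [hMdef]
    calc ‖(A - B) (ψC s)‖ = ⨆ _ : s ∈ Set.Icc (0 : ℝ) t, ‖(A - B) (ψC s)‖ :=
          (ciSup_pos (f := fun _ : s ∈ Set.Icc (0 : ℝ) t => ‖(A - B) (ψC s)‖) hs).symm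
      _ ≤ _ := le_ciSup houter s
  -- mean value inequality
  have hmv : ‖w t - w 0‖ ≤ M * ‖t - 0‖ := by
    refine (convex_Icc (0 : ℝ) t).norm_image_sub_le_of_norm_hasDerivWithin_le
      (fun s _ => (hw s).hasDerivWithinAt) (fun s hs => ?_)
      (Set.left_mem_Icc.2 ht) (Set.right_mem_Icc.2 ht)
    rw [hgnorm s]
    exact hM s hs
  have hw0 : w 0 = x := by
    rw [hwdef]
    simp [exp_zero]
  -- transfer back via the unitary exp ((t : ℂ) • (-C))
  have hinv : exp ((t : ℂ) • (-C)) * exp ((t : ℂ) • C) = 1 := by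
    have hcomm : Commute ((t : ℂ) • (-C)) ((t : ℂ) • C) :=
      (((Commute.refl C).neg_left).smul_left _).smul_right _
    letI : NormedAlgebra ℚ (E →L[ℂ] E) := .restrictScalars ℚ ℂ _
    rw [← exp_add_of_commute hcomm, smul_neg, neg_add_cancel, exp_zero]
  have hdiff : ψ t - ψC t = exp ((t : ℂ) • (-C)) (w 0 - w t) := by
    rw [map_sub, hw0, hψ' t, hψC' t, hwdef]
    congr 1
    have := congrArg (fun P : E →L[ℂ] E => P (exp ((t : ℂ) • D) x)) hinv
    simpa [ContinuousLinearMap.mul_apply] using this.symm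
  have hnd : ‖ψ t - ψC t‖ = ‖w t - w 0‖ := by
    rw [hdiff, ContinuousLinearMap.norm_map_of_mem_unitary (hCu' t), norm_sub_rev]
  have h1 : ‖ψ t - ψC t‖ ≤ M * t := by
    rw [hnd]
    calc ‖w t - w 0‖ ≤ M * ‖t - 0‖ := hmv
      _ = M * t := by rw [sub_zero, Real.norm_of_nonneg ht]
  have h2 : ‖ψ t - ψC t‖ ≤ 2 := by
    have hn1 : ‖ψ t‖ = 1 := by
      rw [hψ' t, ContinuousLinearMap.norm_map_of_mem_unitary (hCu' t), hx]
    have hn2 : ‖ψC t‖ = 1 := by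
      rw [hψC' t, ContinuousLinearMap.norm_map_of_mem_unitary (hDu t), hx]
    calc ‖ψ t - ψC t‖ ≤ ‖ψ t‖ + ‖ψC t‖ := norm_sub_le _ _
      _ = 2 := by rw [hn1, hn2]; norm_num
  calc ‖ψ t - ψC t‖ ^ 2 = ‖ψ t - ψC t‖ * ‖ψ t - ψC t‖ := sq _
    _ ≤ 2 * (M * t) := mul_le_mul h2 h1 (norm_nonneg _) (by norm_num)
    _ = 2 * t * M := by ring
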